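/- arXiv:2404.06306 — 2 statements merged into one kernel-verified Lean document; each statement's English description precedes it below -/
import Mathlib

section
/- Every nontrivial zero ρ of the Riemann zeta function satisfies |Im ρ| > 2π. -/
open Complex Real

open HurwitzZeta MeasureTheory Set Filter

noncomputable section

lemma kernel_nonneg {x : ℝ} (hx : 1 ≤ x) : 0 ≤ evenKernel 0 x - 1 := by
  have hx0 : (0:ℝ) < x := lt_of_lt_of_le one_pos hx
  have hs := hasSum_nat_cosKernel₀ 0 hx0
  simp only [mul_zero, zero_mul, Real.cos_zero, mul_one] at hs
  rw [show ((0:ℝ) : UnitAddCircle) = 0 by norm_num, ← evenKernel_eq_cosKernel_of_zero] at hs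
  exact hs.nonneg fun n ↦ by positivity

lemma kernel_le {x : ℝ} (hx : 1 ≤ x) :
    evenKernel 0 x - 1 ≤ 2 * rexp (-π * x) * (1 - rexp (-2 * π))⁻¹ := by
  have hx0 : (0:ℝ) < x := lt_of_lt_of_le one_pos hx
  have hs := hasSum_nat_cosKernel₀ 0 hx0
  simp only [mul_zero, zero_mul, Real.cos_zero, mul_one] at hs
  rw [show ((0:ℝ) : UnitAddCircle) = 0 by norm_num, ← evenKernel_eq_cosKernel_of_zero] at hs
  have hr0 : 0 < rexp (-2 * π * x) := Real.exp_pos _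
  have hr1 : rexp (-2 * π * x) < 1 := by
    rw [Real.exp_lt_one_iff]; nlinarith [Real.pi_pos]
  have hgeom : HasSum (fun n : ℕ ↦ (2 * rexp (-π * x)) * (rexp (-2 * π * x)) ^ n)
      ((2 * rexp (-π * x)) * (1 - rexp (-2 * π * x))⁻¹) := by
    simpa [div_eq_mul_inv] using (hasSum_geometric_of_lt_one hr0.le hr1).mul_left (2 * rexp (-π * x))
  have hle : evenKernel 0 x - 1 ≤ (2 * rexp (-π * x)) * (1 - rexp (-2 * π * x))⁻¹ := by
    refine hasSum_le (fun n ↦ ?_) hs hgeom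
    rw [← Real.exp_nat_mul]
    have he : 2 * rexp (-π * x) * rexp ((n:ℝ) * (-2 * π * x)) =
        2 * rexp (-π * x + (n:ℝ) * (-2 * π * x)) := by rw [Real.exp_add]; ring
    rw [he]
    have h : -π * ((n:ℝ) + 1) ^ 2 * x ≤ -π * x + (n:ℝ) * (-2 * π * x) := by
      nlinarith [mul_nonneg (mul_nonneg Real.pi_pos.le hx0.le) (sq_nonneg (n:ℝ))]
    have := Real.exp_le_exp.mpr h
    linarith
  refine hle.trans ?_
  have h1 : rexp (-2 * π * x) ≤ rexp (-2 * π) := by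
    rw [Real.exp_le_exp]; nlinarith [Real.pi_pos]
  have h2 : 0 < 1 - rexp (-2 * π) := by
    have : rexp (-2*π) < 1 := by rw [Real.exp_lt_one_iff]; nlinarith [Real.pi_pos]
    linarith
  have h3 : (1 - rexp (-2 * π * x))⁻¹ ≤ (1 - rexp (-2 * π))⁻¹ :=
    inv_anti₀ (by linarith) (by linarith)
  have h4 : 0 ≤ 2 * rexp (-π * x) := by positivity
  exact mul_le_mul_of_nonneg_left h3 h4


noncomputable def SS (x : ℝ) : ℝ :=
  (1/π) * x ^ (-(1:ℝ)/2) - (1/(2*π^2)) * x ^ (-(3:ℝ)/2)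
    + (3/(4*π^3)) * x ^ (-(5:ℝ)/2) - (91/10000) * x ^ (-(7:ℝ)/2)

noncomputable def GG (x : ℝ) : ℝ :=
  rexp (-π*x) * (π * SS x +
    ((1/(2*π)) * x ^ (-(3:ℝ)/2) - (3/(4*π^2)) * x ^ (-(5:ℝ)/2)
      + (15/(8*π^3)) * x ^ (-(7:ℝ)/2) - (637/20000) * x ^ (-(9:ℝ)/2)))

lemma hasDerivAt_negexpSS {x : ℝ} (hx : 0 < x) :
    HasDerivAt (fun t ↦ -(rexp (-π*t) * SS t)) (GG x) x := by
  have hne : x ≠ 0 := hx.ne'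
  have hexp : HasDerivAt (fun t : ℝ ↦ rexp (-π*t)) (-π * rexp (-π*x)) x := by
    have h1 : HasDerivAt (fun t : ℝ ↦ -π*t) (-π) x := by
      simpa using (hasDerivAt_id x).const_mul (-π)
    simpa [mul_comm] using h1.exp
  have hp : ∀ p : ℝ, HasDerivAt (fun t : ℝ ↦ t ^ p) (p * x ^ (p-1)) x :=
    fun p ↦ Real.hasDerivAt_rpow_const (Or.inl hne)
  have hSS : HasDerivAt SS
      ((1/π) * (-(1:ℝ)/2 * x ^ (-(1:ℝ)/2-1)) - (1/(2*π^2)) * (-(3:ℝ)/2 * x ^ (-(3:ℝ)/2-1))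
        + (3/(4*π^3)) * (-(5:ℝ)/2 * x ^ (-(5:ℝ)/2-1))
        - (91/10000) * (-(7:ℝ)/2 * x ^ (-(7:ℝ)/2-1))) x := by
    unfold SS
    exact ((((hp _).const_mul _).sub ((hp _).const_mul _)).add ((hp _).const_mul _)).sub
      ((hp _).const_mul _)
  have h := (hexp.mul hSS).neg
  refine h.congr_deriv ?_
  unfold GG SS
  have e1 : (-(1:ℝ)/2-1) = -(3:ℝ)/2 := by norm_num
  have e2 : (-(3:ℝ)/2-1) = -(5:ℝ)/2 := by norm_num
  have e3 : (-(5:ℝ)/2-1) = -(7:ℝ)/2 := by norm_num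
  have e4 : (-(7:ℝ)/2-1) = -(9:ℝ)/2 := by norm_num
  rw [e1, e2, e3, e4]
  have hπ := Real.pi_ne_zero
  field_simp
  ring

lemma abs_SS_le {x : ℝ} (hx : 1 ≤ x) : |SS x| ≤ 1 := by
  have h : ∀ p : ℝ, p ≤ 0 → x ^ p ∈ Icc (0:ℝ) 1 := fun p hp ↦
    ⟨Real.rpow_nonneg (by linarith) p, Real.rpow_le_one_of_one_le_of_nonpos hx hp⟩
  obtain ⟨h1a, h1b⟩ := h (-(1:ℝ)/2) (by norm_num)
  obtain ⟨h2a, h2b⟩ := h (-(3:ℝ)/2) (by norm_num)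
  obtain ⟨h3a, h3b⟩ := h (-(5:ℝ)/2) (by norm_num)
  obtain ⟨h4a, h4b⟩ := h (-(7:ℝ)/2) (by norm_num)
  have hπ := Real.pi_gt_three
  have hπ2 : (0:ℝ) < π^2 := by positivity
  have hπ3 : (0:ℝ) < π^3 := by positivity
  have i1 : (1/π) * x ^ (-(1:ℝ)/2) ≤ 1/3 := by
    rw [div_mul_eq_mul_div, div_le_div_iff₀ (by linarith) (by norm_num)]
    nlinarith
  have i2 : 0 ≤ (1/π) * x ^ (-(1:ℝ)/2) := by positivity
  have i3 : 0 ≤ (1/(2*π^2)) * x ^ (-(3:ℝ)/2) := by positivity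
  have i4 : (1/(2*π^2)) * x ^ (-(3:ℝ)/2) ≤ 1/3 := by
    rw [div_mul_eq_mul_div, div_le_div_iff₀ (by positivity) (by norm_num)]
    nlinarith
  have i5 : 0 ≤ (3/(4*π^3)) * x ^ (-(5:ℝ)/2) := by positivity
  have i6 : (3/(4*π^3)) * x ^ (-(5:ℝ)/2) ≤ 1/3 := by
    rw [div_mul_eq_mul_div, div_le_div_iff₀ (by positivity) (by norm_num)]
    nlinarith
  have i7 : 0 ≤ (91/10000 : ℝ) * x ^ (-(7:ℝ)/2) := by positivity
  have i8 : (91/10000 : ℝ) * x ^ (-(7:ℝ)/2) ≤ 1/3 := by nlinarith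
  rw [abs_le]
  unfold SS
  constructor <;> nlinarith

lemma GG_abs_le {x : ℝ} (hx : 1 ≤ x) : |GG x| ≤ 6 * rexp (-π * x) := by
  have h : ∀ p : ℝ, p ≤ 0 → x ^ p ∈ Icc (0:ℝ) 1 := fun p hp ↦
    ⟨Real.rpow_nonneg (by linarith) p, Real.rpow_le_one_of_one_le_of_nonpos hx hp⟩
  obtain ⟨h2a, h2b⟩ := h (-(3:ℝ)/2) (by norm_num)
  obtain ⟨h3a, h3b⟩ := h (-(5:ℝ)/2) (by norm_num)
  obtain ⟨h4a, h4b⟩ := h (-(7:ℝ)/2) (by norm_num)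
  obtain ⟨h5a, h5b⟩ := h (-(9:ℝ)/2) (by norm_num)
  have hπ := Real.pi_gt_three
  have hπlt : π < 3.15 := Real.pi_lt_d2
  have hS := abs_SS_le hx
  rw [abs_le] at hS
  have hπ2 : (3:ℝ)^2 < π^2 := by nlinarith
  have hπ3 : (3:ℝ)^3 < π^3 := by nlinarith
  have hexp : 0 < rexp (-π*x) := Real.exp_pos _
  unfold GG
  rw [abs_mul, Real.abs_exp]
  rw [show (6:ℝ) * rexp (-π*x) = rexp (-π*x) * 6 by ring]
  refine mul_le_mul_of_nonneg_left ?_ hexp.le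
  have b1 : (1/(2*π)) * x ^ (-(3:ℝ)/2) ≤ 1/2 := by
    rw [div_mul_eq_mul_div, div_le_div_iff₀ (by positivity) (by norm_num)]
    nlinarith
  have b2 : 0 ≤ (1/(2*π)) * x ^ (-(3:ℝ)/2) := by positivity
  have b3 : (3/(4*π^2)) * x ^ (-(5:ℝ)/2) ≤ 1/2 := by
    rw [div_mul_eq_mul_div, div_le_div_iff₀ (by positivity) (by norm_num)]
    nlinarith
  have b4 : 0 ≤ (3/(4*π^2)) * x ^ (-(5:ℝ)/2) := by positivity
  have b5 : (15/(8*π^3)) * x ^ (-(7:ℝ)/2) ≤ 1/2 := by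
    rw [div_mul_eq_mul_div, div_le_div_iff₀ (by positivity) (by norm_num)]
    nlinarith
  have b6 : 0 ≤ (15/(8*π^3)) * x ^ (-(7:ℝ)/2) := by positivity
  have b7 : (637/20000 : ℝ) * x ^ (-(9:ℝ)/2) ≤ 1/2 := by nlinarith
  have b8 : 0 ≤ (637/20000 : ℝ) * x ^ (-(9:ℝ)/2) := by positivity
  have hπS1 : π * SS x ≤ π := by
    simpa using mul_le_mul_of_nonneg_left hS.2 Real.pi_pos.le
  have hπS2 : -π ≤ π * SS x := by
    have := mul_le_mul_of_nonneg_left hS.1 Real.pi_pos.le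
    simpa using this
  rw [abs_le]
  constructor <;> linarith


lemma contOn_rpow (p : ℝ) : ContinuousOn (fun x : ℝ ↦ x ^ p) (Ici 1) := by
  intro x hx
  have hx0 : x ≠ 0 := by
    have : (1:ℝ) ≤ x := hx
    positivity
  exact (Real.continuousAt_rpow_const x p (Or.inl hx0)).continuousWithinAt

lemma contOn_crpow (c p : ℝ) : ContinuousOn (fun x : ℝ ↦ c * x ^ p) (Ici 1) :=
  continuousOn_const.mul (contOn_rpow p)

lemma contOn_expneg : ContinuousOn (fun x : ℝ ↦ rexp (-π*x)) (Ici 1) :=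
  (Real.continuous_exp.comp (continuous_const.mul continuous_id)).continuousOn

lemma continuousOn_SS : ContinuousOn SS (Ici 1) := by
  unfold SS
  exact (((contOn_crpow _ _).sub (contOn_crpow _ _)).add (contOn_crpow _ _)).sub (contOn_crpow _ _)

lemma continuousOn_GG : ContinuousOn GG (Ici 1) := by
  unfold GG
  exact contOn_expneg.mul ((continuousOn_const.mul continuousOn_SS).add
    ((((contOn_crpow _ _).sub (contOn_crpow _ _)).add (contOn_crpow _ _)).sub (contOn_crpow _ _)))

lemma integrableOn_GG : IntegrableOn GG (Ioi (1:ℝ)) := by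
  refine Integrable.mono' ((exp_neg_integrableOn_Ioi 1 Real.pi_pos).const_mul 6) ?_ ?_
  · exact (continuousOn_GG.mono Ioi_subset_Ici_self).aestronglyMeasurable measurableSet_Ioi
  · filter_upwards [ae_restrict_mem measurableSet_Ioi] with x hx
    rw [Real.norm_eq_abs]
    have := GG_abs_le (le_of_lt hx)
    simpa [mul_comm] using this

lemma tendsto_negexpSS : Tendsto (fun t ↦ -(rexp (-π*t) * SS t)) atTop (nhds 0) := by
  have hb : ∀ᶠ x : ℝ in atTop, ‖-(rexp (-π*x) * SS x)‖ ≤ rexp (-π*x) := by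
    filter_upwards [eventually_ge_atTop (1:ℝ)] with x hx
    rw [norm_neg, norm_mul, Real.norm_eq_abs, Real.norm_eq_abs, Real.abs_exp]
    calc rexp (-π*x) * |SS x| ≤ rexp (-π*x) * 1 :=
          mul_le_mul_of_nonneg_left (abs_SS_le hx) (Real.exp_pos _).le
      _ = rexp (-π*x) := mul_one _
  have h1 : Tendsto (fun x : ℝ ↦ π * x) atTop atTop :=
    Tendsto.const_mul_atTop Real.pi_pos tendsto_id
  have hg : Tendsto (fun x : ℝ ↦ rexp (-π*x)) atTop (nhds 0) := by
    have := Real.tendsto_exp_neg_atTop_nhds_zero.comp h1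
    simpa [Function.comp_def, neg_mul] using this
  exact squeeze_zero_norm' hb hg

lemma pointwise_GG {x : ℝ} (hx1 : 1 ≤ x) : x ^ (-(1:ℝ)/2) * rexp (-π*x) ≤ GG x := by
  have hx0 : (0:ℝ) < x := lt_of_lt_of_le one_pos hx1
  set y := x ^ (-(1:ℝ)/2) with hy
  have hy0 : 0 < y := Real.rpow_pos_of_pos hx0 _
  have hy1 : y ≤ 1 := Real.rpow_le_one_of_one_le_of_nonpos hx1 (by norm_num)
  have hpow : ∀ k : ℕ, x ^ (-(k:ℝ)/2) = y ^ k := fun k ↦ by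
    rw [hy, show (-(k:ℝ)/2) = (-(1:ℝ)/2) * (k:ℝ) by ring, Real.rpow_mul hx0.le,
      Real.rpow_natCast]
  have h3 : x ^ (-(3:ℝ)/2) = y ^ 3 := by have := hpow 3; norm_num at this ⊢; exact this
  have h5 : x ^ (-(5:ℝ)/2) = y ^ 5 := by have := hpow 5; norm_num at this ⊢; exact this
  have h7 : x ^ (-(7:ℝ)/2) = y ^ 7 := by have := hpow 7; norm_num at this ⊢; exact this
  have h9 : x ^ (-(9:ℝ)/2) = y ^ 9 := by have := hpow 9; norm_num at this ⊢; exact this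
  unfold GG SS
  rw [← hy, h3, h5, h7, h9, mul_comm y (rexp (-π*x))]
  refine mul_le_mul_of_nonneg_left ?_ (Real.exp_pos _).le
  have hπ0 : (0:ℝ) < π := Real.pi_pos
  have hkey : π * ((1/π) * y - (1/(2*π^2)) * y^3 + (3/(4*π^3)) * y^5 - (91/10000) * y^7)
      + ((1/(2*π)) * y^3 - (3/(4*π^2)) * y^5 + (15/(8*π^3)) * y^7 - (637/20000) * y^9)
      = y + y^7 * ((15/(8*π^3)) - (91/10000)*π - (637/20000) * y^2) := by
    field_simp
    ring
  rw [hkey]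
  have hcoef : 0 ≤ (15/(8*π^3)) - (91/10000)*π - (637/20000) * y^2 := by
    have hπa : 3.141592 < π := Real.pi_gt_d6
    have hπb : π < 3.141593 := Real.pi_lt_d6
    have hy2 : y^2 ≤ 1 := by nlinarith
    have h1 : (15:ℝ)/(8*3.141593^3) ≤ 15/(8*π^3) := by
      apply div_le_div_of_nonneg_left (by norm_num) (by positivity)
      nlinarith
    have h2 : (15:ℝ)/(8*3.141593^3) ≥ 0.0604715 := by norm_num
    nlinarith
  nlinarith [mul_nonneg (pow_nonneg hy0.le 7) hcoef]


lemma integrableOn_base : IntegrableOn (fun x ↦ x ^ (-(1:ℝ)/2) * rexp (-π*x)) (Ioi (1:ℝ)) := by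
  refine Integrable.mono' (exp_neg_integrableOn_Ioi 1 Real.pi_pos) ?_ ?_
  · exact (((contOn_rpow (-(1:ℝ)/2)).mul contOn_expneg).mono
      Ioi_subset_Ici_self).aestronglyMeasurable measurableSet_Ioi
  · filter_upwards [ae_restrict_mem measurableSet_Ioi] with x hx
    have hx1 : (1:ℝ) ≤ x := le_of_lt hx
    rw [Real.norm_eq_abs, abs_mul, Real.abs_exp,
      _root_.abs_of_nonneg (Real.rpow_nonneg (by linarith) _)]
    calc x ^ (-(1:ℝ)/2) * rexp (-π*x) ≤ 1 * rexp (-π*x) :=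
          mul_le_mul_of_nonneg_right
            (Real.rpow_le_one_of_one_le_of_nonpos hx1 (by norm_num)) (Real.exp_pos _).le
      _ = rexp (-π*x) := one_mul _

lemma A_bound : ∫ x in Ioi (1:ℝ), x ^ (-(1:ℝ)/2) * rexp (-π*x) ≤ rexp (-π) * (2828/10000) := by
  have hval : ∫ x in Ioi (1:ℝ), GG x = 0 - (-(rexp (-π*1) * SS 1)) := by
    refine integral_Ioi_of_hasDerivAt_of_tendsto ?_ (fun x hx ↦ hasDerivAt_negexpSS ?_)
      integrableOn_GG tendsto_negexpSS
    · exact (((hasDerivAt_negexpSS one_pos).continuousAt).continuousWithinAt)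
    · exact lt_trans one_pos hx
  have hint1 := integrableOn_base
  have hmono : ∫ x in Ioi (1:ℝ), x ^ (-(1:ℝ)/2) * rexp (-π*x) ≤ ∫ x in Ioi (1:ℝ), GG x :=
    setIntegral_mono_on hint1 integrableOn_GG measurableSet_Ioi
      (fun x hx ↦ pointwise_GG (le_of_lt hx))
  refine hmono.trans ?_
  rw [hval]
  have hSS1 : SS 1 ≤ 2828/10000 := by
    unfold SS
    rw [Real.one_rpow, Real.one_rpow, Real.one_rpow, Real.one_rpow]
    have hπa : 3.141592 < π := Real.pi_gt_d6
    have hπb : π < 3.141593 := Real.pi_lt_d6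
    have e1 : 1/π ≤ 0.318311 := by rw [div_le_iff₀ Real.pi_pos]; nlinarith
    have hp2 : π^2 < 3.141593^2 := by nlinarith
    have hp2' : 3.141592^2 < π^2 := by nlinarith
    have hp3 : 3.141592^3 < π^3 := by nlinarith
    have e2 : (0.0506605:ℝ) ≤ 1/(2*π^2) := by
      rw [le_div_iff₀ (by positivity)]; nlinarith
    have e3 : 3/(4*π^3) ≤ 0.0241890 := by
      rw [div_le_iff₀ (by positivity)]; nlinarith
    linarith
  calc 0 - (-(rexp (-π*1) * SS 1)) = rexp (-π) * SS 1 := by rw [mul_one]; ring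
    _ ≤ rexp (-π) * (2828/10000) := mul_le_mul_of_nonneg_left hSS1 (Real.exp_pos _).le


lemma f_modif_eval_gt {x : ℝ} (hx : 1 < x) :
    (hurwitzEvenFEPair 0).f_modif x = ((evenKernel 0 x - 1 : ℝ) : ℂ) := by
  rw [WeakFEPair.f_modif, Pi.add_apply, indicator_of_mem (mem_Ioi.mpr hx),
    indicator_of_notMem (notMem_Ioo_of_ge hx.le), add_zero]
  have hf₀ : (hurwitzEvenFEPair 0).f₀ = 1 := by simp [hurwitzEvenFEPair]
  have hfx : (hurwitzEvenFEPair 0).f x = ((evenKernel 0 x : ℝ) : ℂ) := rfl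
  rw [hf₀, hfx]
  push_cast
  ring

lemma f_modif_eval_one : (hurwitzEvenFEPair 0).f_modif 1 = 0 := by
  rw [WeakFEPair.f_modif, Pi.add_apply, indicator_of_notMem (by simp),
    indicator_of_notMem (by simp), add_zero]

lemma f_modif_eval_lt {x : ℝ} (hx0 : 0 < x) (hx : x < 1) :
    (hurwitzEvenFEPair 0).f_modif x
      = ((x ^ (-(1:ℝ)/2) * (evenKernel 0 x⁻¹ - 1) : ℝ) : ℂ) := by
  rw [WeakFEPair.f_modif, Pi.add_apply, indicator_of_notMem (by simp [hx.le]),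
    indicator_of_mem (mem_Ioo.mpr ⟨hx0, hx⟩), zero_add]
  have hk : (hurwitzEvenFEPair 0).k = 1/2 := rfl
  have hε : (hurwitzEvenFEPair 0).ε = 1 := rfl
  have hg : (hurwitzEvenFEPair 0).g₀ = 1 := rfl
  have hfx : (hurwitzEvenFEPair 0).f x = ((evenKernel 0 x : ℝ) : ℂ) := rfl
  rw [hk, hε, hg, hfx, one_mul, smul_eq_mul, mul_one]
  have hFE := evenKernel_functional_equation 0 x
  rw [← evenKernel_eq_cosKernel_of_zero] at hFE
  have hxpow : (0:ℝ) < x ^ ((1:ℝ)/2) := Real.rpow_pos_of_pos hx0 _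
  have hhalf : x ^ (-(1:ℝ)/2) = (x ^ ((1:ℝ)/2))⁻¹ := by
    rw [show (-(1:ℝ)/2) = -((1:ℝ)/2) by norm_num, Real.rpow_neg hx0.le]
  have h1 : evenKernel 0 x = x ^ (-(1:ℝ)/2) * evenKernel 0 x⁻¹ := by
    rw [hFE, hhalf, one_div, one_div]
    norm_num
  have h2 : x ^ (-((1:ℝ)/2)) = x ^ (-(1:ℝ)/2) := by norm_num
  rw [h2, h1]
  push_cast
  ring


lemma m2_le_one {x : ℝ} (hx0 : 0 < x) (hx1 : x ≤ 1) :
    x ^ (-(3:ℝ)/2) * rexp (-π/x) ≤ 1 := by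
  rw [Real.rpow_def_of_pos hx0, ← Real.exp_add, show (1:ℝ) = rexp 0 by simp, Real.exp_le_exp]
  have hlog : -Real.log x ≤ x⁻¹ - 1 := by
    simpa [Real.log_inv] using Real.log_le_sub_one_of_pos (inv_pos.mpr hx0)
  have hinv1 : (1:ℝ) ≤ x⁻¹ := (one_le_inv₀ hx0).mpr hx1
  have c1 : (3/2:ℝ)*(-Real.log x) ≤ (3/2)*(x⁻¹-1) :=
    mul_le_mul_of_nonneg_left hlog (by norm_num)
  have c2 : (3/2:ℝ)*(x⁻¹-1) - π*x⁻¹ ≤ -π := by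
    nlinarith [mul_nonneg (by linarith [Real.pi_gt_three] : (0:ℝ) ≤ π - 3/2)
      (by linarith : (0:ℝ) ≤ x⁻¹ - 1)]
  have c3 : -π/x = -(π*x⁻¹) := by rw [neg_div, div_eq_mul_inv]
  rw [c3]
  nlinarith [Real.pi_pos]

lemma cov : ∫ x in Ioc (0:ℝ) 1, x ^ (-(3:ℝ)/2) * rexp (-π/x)
    = ∫ x in Ioi (1:ℝ), x ^ (-(1:ℝ)/2) * rexp (-π*x) := by
  set g : ℝ → ℝ := (Ioi 1).indicator (fun u ↦ u ^ (-(1:ℝ)/2) * rexp (-π*u)) with hg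
  have h := integral_comp_rpow_Ioi g (p := -1) (by norm_num)
  have hLHS : ∀ x ∈ Ioi (0:ℝ),
      (|(-1:ℝ)| * x ^ ((-1:ℝ) - 1)) • g (x ^ (-1:ℝ))
        = (Ioo (0:ℝ) 1).indicator (fun t ↦ t ^ (-(3:ℝ)/2) * rexp (-π/t)) x := by
    intro x hx
    have hx0 : (0:ℝ) < x := hx
    rw [Real.rpow_neg_one]
    rcases lt_trichotomy x 1 with hlt | heq | hgt
    · have hxin : x⁻¹ ∈ Ioi (1:ℝ) := by
        exact mem_Ioi.mpr ((one_lt_inv₀ hx0).mpr hlt)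
      rw [hg, indicator_of_mem hxin, indicator_of_mem (mem_Ioo.mpr ⟨hx0, hlt⟩)]
      have e1 : (x⁻¹) ^ (-(1:ℝ)/2) = x ^ ((1:ℝ)/2) := by
        rw [← Real.rpow_neg_one, ← Real.rpow_mul hx0.le]
        norm_num
      have e2 : rexp (-π * x⁻¹) = rexp (-π/x) := by rw [div_eq_mul_inv]
      rw [e1, e2, smul_eq_mul, abs_neg, abs_one, one_mul]
      rw [show ((-1:ℝ) - 1) = (-2:ℝ) by norm_num]
      rw [← mul_assoc, ← Real.rpow_add hx0]
      norm_num
    · subst heq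
      simp [hg, indicator_of_notMem (by simp : (1:ℝ)⁻¹ ∉ Ioi (1:ℝ)),
        indicator_of_notMem (by simp : (1:ℝ) ∉ Ioo (0:ℝ) 1)]
    · have hxout : x⁻¹ ∉ Ioi (1:ℝ) := by
        rw [mem_Ioi, not_lt]
        rw [inv_le_one_iff₀]; right; linarith
      rw [hg, indicator_of_notMem hxout,
        indicator_of_notMem (fun h ↦ absurd h.2 (by linarith) : x ∉ Ioo (0:ℝ) 1)]
      simp
  rw [setIntegral_congr_fun measurableSet_Ioi hLHS] at h
  rw [integral_indicator measurableSet_Ioo, Measure.restrict_restrict measurableSet_Ioo] at h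
  rw [inter_eq_left.mpr (Ioo_subset_Ioi_self)] at h
  rw [hg, integral_indicator measurableSet_Ioi, Measure.restrict_restrict measurableSet_Ioi,
    inter_eq_left.mpr (Ioi_subset_Ioi zero_le_one)] at h
  rw [integral_Ioc_eq_integral_Ioo]
  exact h


lemma integrableOn_m2 : IntegrableOn (fun x : ℝ ↦ x ^ (-(3:ℝ)/2) * rexp (-π/x)) (Ioc (0:ℝ) 1) := by
  refine Integrable.mono' (integrableOn_const (C := (1:ℝ)) measure_Ioc_lt_top.ne) ?_ ?_
  · refine ContinuousOn.aestronglyMeasurable ?_ measurableSet_Ioc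
    intro x hx
    have hx0 : (0:ℝ) < x := hx.1
    refine ContinuousAt.continuousWithinAt ?_
    exact (Real.continuousAt_rpow_const x _ (Or.inl hx0.ne')).mul
      (Real.continuous_exp.continuousAt.comp
        ((continuousAt_const.div continuousAt_id hx0.ne')))
  · filter_upwards [ae_restrict_mem measurableSet_Ioc] with x hx
    rw [Real.norm_eq_abs, _root_.abs_of_nonneg
      (mul_nonneg (Real.rpow_nonneg hx.1.le _) (Real.exp_pos _).le)]
    exact m2_le_one hx.1 hx.2

lemma re_half_sub_one (s : ℂ) : (s/2 - 1).re = s.re/2 - 1 := by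
  rw [Complex.sub_re, Complex.one_re, Complex.div_re]
  simp [Complex.normSq]
  ring

lemma lambda0_bound {s : ℂ} (hσ0 : 0 < s.re) (hσ1 : s.re < 1) :
    ‖completedRiemannZeta₀ s‖
      ≤ 2 * (1 - rexp (-(2*π)))⁻¹ * (rexp (-π) * (2828/10000)) := by
  have hM : HasMellin (hurwitzEvenFEPair 0).f_modif (s/2) ((hurwitzEvenFEPair 0).Λ₀ (s/2)) := ⟨((hurwitzEvenFEPair 0).isStrongFEPair_toStrongFEPair.hasMellin (s/2)).1, rfl⟩
  have hrepr : completedRiemannZeta₀ s = ((hurwitzEvenFEPair 0).Λ₀ (s/2)) / 2 := rfl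
  set F : ℝ → ℂ := fun t : ℝ ↦ (t:ℂ) ^ (s/2 - 1) • (hurwitzEvenFEPair 0).f_modif t with hF
  have hInt : IntegrableOn F (Ioi 0) := hM.1
  have hval : (hurwitzEvenFEPair 0).Λ₀ (s/2) = ∫ t in Ioi (0:ℝ), F t := hM.2.symm
  set c₀ : ℝ := (1 - rexp (-(2*π)))⁻¹ with hc₀
  have hc₀' : (1 - rexp (-2 * π))⁻¹ = c₀ := by norm_num [hc₀]
  have hexp2π : rexp (-(2*π)) < 1 := by
    rw [Real.exp_lt_one_iff]; nlinarith [Real.pi_pos]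
  have hc₀pos : 0 < c₀ := by rw [hc₀]; exact inv_pos.mpr (by linarith)
  -- pointwise bounds
  have hnormF : ∀ x : ℝ, 0 < x → ‖F x‖ = x ^ (s.re/2 - 1) * ‖(hurwitzEvenFEPair 0).f_modif x‖ := by
    intro x hx0
    rw [hF, norm_smul, Complex.norm_cpow_eq_rpow_re_of_pos hx0,
      re_half_sub_one]
  have hbound1 : ∀ x ∈ Ioi (1:ℝ),
      ‖F x‖ ≤ (2*c₀) * (x ^ (-(1:ℝ)/2) * rexp (-π*x)) := by
    intro x hx
    have hx1 : (1:ℝ) < x := hx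
    have hx0 : (0:ℝ) < x := lt_trans one_pos hx1
    rw [hnormF x hx0, f_modif_eval_gt hx1, Complex.norm_real, Real.norm_eq_abs,
      _root_.abs_of_nonneg (kernel_nonneg hx1.le)]
    have h1 : x ^ (s.re/2 - 1) ≤ x ^ (-(1:ℝ)/2) :=
      Real.rpow_le_rpow_of_exponent_le hx1.le (by linarith)
    have h2 : evenKernel 0 x - 1 ≤ 2 * rexp (-π * x) * c₀ := by
      have := kernel_le hx1.le; rw [← hc₀']; linarith
    calc x ^ (s.re/2 - 1) * (evenKernel 0 x - 1)
        ≤ x ^ (-(1:ℝ)/2) * (2 * rexp (-π * x) * c₀) := by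
          apply mul_le_mul h1 h2 (kernel_nonneg hx1.le) (Real.rpow_nonneg hx0.le _)
      _ = (2*c₀) * (x ^ (-(1:ℝ)/2) * rexp (-π*x)) := by ring
  have hbound2 : ∀ x ∈ Ioc (0:ℝ) 1,
      ‖F x‖ ≤ (2*c₀) * (x ^ (-(3:ℝ)/2) * rexp (-π/x)) := by
    intro x hx
    have hx0 : (0:ℝ) < x := hx.1
    rcases eq_or_lt_of_le hx.2 with h1 | hlt
    · subst h1
      rw [hF]
      simp only [f_modif_eval_one, smul_zero, norm_zero]
      have h9 : (0:ℝ) ≤ (1:ℝ) ^ (-(3:ℝ)/2) * rexp (-π/1) := by positivity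
      nlinarith [hc₀pos, Real.exp_pos (-π/(1:ℝ)),
        Real.rpow_nonneg (zero_le_one' ℝ) (-(3:ℝ)/2)]
    · have hinv1 : (1:ℝ) < x⁻¹ := (one_lt_inv₀ hx0).mpr hlt
      rw [hnormF x hx0, f_modif_eval_lt hx0 hlt, Complex.norm_real, Real.norm_eq_abs,
        abs_mul, _root_.abs_of_nonneg (Real.rpow_nonneg hx0.le _),
        _root_.abs_of_nonneg (kernel_nonneg hinv1.le)]
      have h2 : evenKernel 0 x⁻¹ - 1 ≤ 2 * rexp (-π * x⁻¹) * c₀ := by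
        have := kernel_le hinv1.le; rw [← hc₀']; linarith
      have h3 : x ^ (s.re/2 - 1) * x ^ (-(1:ℝ)/2) = x ^ (s.re/2 - 1 + -(1:ℝ)/2) :=
        (Real.rpow_add hx0 _ _).symm
      have h4 : x ^ (s.re/2 - 1 + -(1:ℝ)/2) ≤ x ^ (-(3:ℝ)/2) :=
        Real.rpow_le_rpow_of_exponent_ge hx0 hlt.le (by linarith)
      have h5 : rexp (-π * x⁻¹) = rexp (-π/x) := by rw [div_eq_mul_inv]
      calc x ^ (s.re/2 - 1) * (x ^ (-(1:ℝ)/2) * (evenKernel 0 x⁻¹ - 1))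
          = (x ^ (s.re/2 - 1) * x ^ (-(1:ℝ)/2)) * (evenKernel 0 x⁻¹ - 1) := by ring
        _ ≤ x ^ (-(3:ℝ)/2) * (2 * rexp (-π * x⁻¹) * c₀) := by
            apply mul_le_mul (h3 ▸ h4) h2 (kernel_nonneg hinv1.le) (Real.rpow_nonneg hx0.le _)
        _ = (2*c₀) * (x ^ (-(3:ℝ)/2) * rexp (-π/x)) := by rw [h5]; ring
  -- split the integral
  have hIntIoc : IntegrableOn (fun t ↦ ‖F t‖) (Ioc (0:ℝ) 1) :=
    IntegrableOn.mono_set hInt.norm Ioc_subset_Ioi_self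
  have hIntIoi : IntegrableOn (fun t ↦ ‖F t‖) (Ioi (1:ℝ)) :=
    IntegrableOn.mono_set hInt.norm (Ioi_subset_Ioi zero_le_one)
  have hsplit : ∫ t in Ioi (0:ℝ), ‖F t‖
      = (∫ t in Ioc (0:ℝ) 1, ‖F t‖) + ∫ t in Ioi (1:ℝ), ‖F t‖ := by
    rw [← setIntegral_union (Ioc_disjoint_Ioi le_rfl) measurableSet_Ioi hIntIoc hIntIoi,
      Ioc_union_Ioi_eq_Ioi zero_le_one]
  have hA2 : ∫ t in Ioc (0:ℝ) 1, ‖F t‖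
      ≤ (2*c₀) * ∫ x in Ioi (1:ℝ), x ^ (-(1:ℝ)/2) * rexp (-π*x) := by
    rw [← cov, ← MeasureTheory.integral_const_mul]
    exact setIntegral_mono_on hIntIoc (integrableOn_m2.const_mul _) measurableSet_Ioc hbound2
  have hA1 : ∫ t in Ioi (1:ℝ), ‖F t‖
      ≤ (2*c₀) * ∫ x in Ioi (1:ℝ), x ^ (-(1:ℝ)/2) * rexp (-π*x) := by
    rw [← MeasureTheory.integral_const_mul]
    exact setIntegral_mono_on hIntIoi (integrableOn_base.const_mul _) measurableSet_Ioi hbound1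
  have hAb := A_bound
  have hApos : (0:ℝ) ≤ ∫ x in Ioi (1:ℝ), x ^ (-(1:ℝ)/2) * rexp (-π*x) :=
    setIntegral_nonneg measurableSet_Ioi (fun x hx ↦
      mul_nonneg (Real.rpow_nonneg (le_trans zero_le_one (le_of_lt hx)) _) (Real.exp_pos _).le)
  have hnorm : ‖(hurwitzEvenFEPair 0).Λ₀ (s/2)‖ ≤ ∫ t in Ioi (0:ℝ), ‖F t‖ := by
    rw [hval]
    exact norm_integral_le_integral_norm F
  have htotal : ‖(hurwitzEvenFEPair 0).Λ₀ (s/2)‖ ≤ (4*c₀) * (rexp (-π) * (2828/10000)) := by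
    calc ‖(hurwitzEvenFEPair 0).Λ₀ (s/2)‖ ≤ ∫ t in Ioi (0:ℝ), ‖F t‖ := hnorm
      _ = (∫ t in Ioc (0:ℝ) 1, ‖F t‖) + ∫ t in Ioi (1:ℝ), ‖F t‖ := hsplit
      _ ≤ (2*c₀) * (∫ x in Ioi (1:ℝ), x ^ (-(1:ℝ)/2) * rexp (-π*x))
          + (2*c₀) * (∫ x in Ioi (1:ℝ), x ^ (-(1:ℝ)/2) * rexp (-π*x)) := add_le_add hA2 hA1
      _ = (4*c₀) * (∫ x in Ioi (1:ℝ), x ^ (-(1:ℝ)/2) * rexp (-π*x)) := by ring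
      _ ≤ (4*c₀) * (rexp (-π) * (2828/10000)) := by
          apply mul_le_mul_of_nonneg_left hAb (by linarith [hc₀pos])
  rw [hrepr, norm_div]
  simp only [Complex.norm_ofNat]
  rw [div_le_iff₀ (by norm_num : (0:ℝ) < 2)]
  calc ‖(hurwitzEvenFEPair 0).Λ₀ (s/2)‖ ≤ (4*c₀) * (rexp (-π) * (2828/10000)) := htotal
    _ = 2 * c₀ * (rexp (-π) * (2828/10000)) * 2 := by ring


lemma exp_neg_pi_le : rexp (-π) ≤ 0.0432140 := by
  have h1 : (23.140677 : ℝ) ≤ rexp 3.141592 := by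
    have hs := Real.sum_le_exp_of_nonneg (x := 3.141592) (by norm_num) 25
    refine le_trans ?_ hs
    simp only [Finset.sum_range_succ, Finset.sum_range_zero]
    norm_num [Nat.factorial]
  have h2 : (23.140677 : ℝ) ≤ rexp π := by
    refine h1.trans (Real.exp_le_exp.mpr Real.pi_gt_d6.le)
  rw [Real.exp_neg]
  rw [inv_le_comm₀ (Real.exp_pos π) (by norm_num)]
  refine le_trans (by norm_num) h2

lemma numeric_final :
    (1/16 + 4*π^2 + 16*π^4) * (2 * (1 - rexp (-(2*π)))⁻¹ * (rexp (-π) * (2828/10000)))^2 < 1 := by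
  set e : ℝ := rexp (-π) with he
  have he0 : 0 < e := Real.exp_pos _
  have heE : e ≤ 0.0432140 := exp_neg_pi_le
  have h2e : rexp (-(2*π)) = e * e := by rw [he, ← Real.exp_add]; ring_nf
  have hpos : (0:ℝ) < 1 - e*e := by nlinarith
  have hinv : (1 - e*e)⁻¹ ≤ (1 - (0.0432140:ℝ)^2)⁻¹ := by
    apply inv_anti₀ (by norm_num) (by nlinarith)
  have hB : 2 * (1 - e*e)⁻¹ * (e * (2828/10000)) ≤ 0.0244876 := by
    have s1 : e * (2828/10000) ≤ (0.0432140:ℝ) * (2828/10000) := by nlinarith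
    have s2 : 2 * (1 - e*e)⁻¹ ≤ 2 * (1 - (0.0432140:ℝ)^2)⁻¹ := by linarith
    have s3 : 0 ≤ e * (2828/10000 : ℝ) := by positivity
    have s4 : (0:ℝ) ≤ 2 * (1 - (0.0432140:ℝ)^2)⁻¹ := by norm_num
    calc 2 * (1 - e*e)⁻¹ * (e * (2828/10000))
        ≤ (2 * (1 - (0.0432140:ℝ)^2)⁻¹) * ((0.0432140:ℝ) * (2828/10000)) :=
          mul_le_mul s2 s1 s3 s4
      _ ≤ 0.0244876 := by norm_num
  have hB0 : 0 ≤ 2 * (1 - e*e)⁻¹ * (e * (2828/10000)) := by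
    have : 0 ≤ (1 - e*e)⁻¹ := (inv_pos.mpr hpos).le
    positivity
  have hp2 : π^2 ≤ (3.141593:ℝ)^2 := by nlinarith [Real.pi_lt_d6, Real.pi_gt_d6]
  have hp4 : π^4 ≤ (3.141593:ℝ)^4 := by nlinarith [hp2, sq_nonneg π, Real.pi_pos]
  have hM : 1/16 + 4*π^2 + 16*π^4 ≤ 1/16 + 4*(3.141593:ℝ)^2 + 16*(3.141593:ℝ)^4 := by
    linarith
  have hM0 : (0:ℝ) ≤ 1/16 + 4*π^2 + 16*π^4 := by positivity
  rw [h2e]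
  calc (1/16 + 4*π^2 + 16*π^4) * (2 * (1 - e*e)⁻¹ * (e * (2828/10000)))^2
      ≤ (1/16 + 4*(3.141593:ℝ)^2 + 16*(3.141593:ℝ)^4) * (0.0244876:ℝ)^2 := by
        apply mul_le_mul hM (pow_le_pow_left₀ hB0 hB 2) (sq_nonneg _) (by norm_num)
    _ < 1 := by norm_num

end

/-- A nontrivial zero of the Riemann zeta function: a point of the open critical strip
where `ζ` vanishes. -/
def NontrivialZero (ρ : ℂ) : Prop := 0 < ρ.re ∧ ρ.re < 1 ∧ riemannZeta ρ = 0

theorem im_of_nontrivial_zero_gt_two_pi (ρ : ℂ) (hρ : NontrivialZero ρ) :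
    2 * π < |ρ.im| := by
  obtain ⟨h0, h1, hz⟩ := hρ
  by_contra hcon
  push_neg at hcon
  have hρ0 : ρ ≠ 0 := fun h ↦ by rw [h] at h0; simp at h0
  have hρ1 : ρ ≠ 1 := fun h ↦ by rw [h] at h1; simp at h1
  have h1ρ : (1:ℂ) - ρ ≠ 0 := sub_ne_zero.mpr (Ne.symm hρ1)
  have hΛ : completedRiemannZeta ρ = 0 := by
    have hd := riemannZeta_def_of_ne_zero hρ0
    rw [hz] at hd
    have hG : Gammaℝ ρ ≠ 0 := Gammaℝ_ne_zero_of_re_pos h0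
    field_simp at hd
    simpa using hd.symm
  have hΛ₀ : completedRiemannZeta₀ ρ = 1/(ρ*(1-ρ)) := by
    have he := completedRiemannZeta_eq ρ
    rw [hΛ] at he
    have h2 : completedRiemannZeta₀ ρ = 1/ρ + 1/(1-ρ) := by linear_combination -he
    rw [h2]
    field_simp
    ring
  have habs : ‖completedRiemannZeta₀ ρ‖
      = 1/(‖ρ‖ * ‖1-ρ‖) := by
    rw [hΛ₀, norm_div, norm_one, norm_mul]
  have hγ : ρ.im^2 ≤ 4*π^2 := by
    nlinarith [_root_.sq_abs ρ.im, abs_nonneg ρ.im, Real.pi_pos]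
  have hD2 : (‖ρ‖ * ‖1-ρ‖)^2 ≤ 1/16 + 4*π^2 + 16*π^4 := by
    have e1 : (‖ρ‖)^2 = ρ.re^2 + ρ.im^2 := by
      rw [Complex.sq_norm, Complex.normSq_apply]; ring
    have e2 : (‖1-ρ‖)^2 = (1-ρ.re)^2 + ρ.im^2 := by
      rw [Complex.sq_norm, Complex.normSq_apply]
      simp [Complex.sub_re, Complex.sub_im]
      ring
    have expand : (‖ρ‖ * ‖1-ρ‖)^2
        = (ρ.re^2+ρ.im^2)*((1-ρ.re)^2+ρ.im^2) := by rw [mul_pow, e1, e2]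
    rw [expand]
    have hu0 : 0 ≤ ρ.re*(1-ρ.re) := mul_nonneg h0.le (by linarith)
    have hu2 : (ρ.re*(1-ρ.re))^2 ≤ 1/16 := by nlinarith [sq_nonneg (ρ.re - 1/2)]
    have hβ2 : ρ.re^2 + (1-ρ.re)^2 ≤ 1 := by nlinarith
    have hg2 : ρ.im^2*(ρ.re^2+(1-ρ.re)^2) ≤ ρ.im^2 := by nlinarith [sq_nonneg ρ.im]
    have hγ4 : ρ.im^4 ≤ 16*π^4 := by nlinarith [sq_nonneg ρ.im, sq_nonneg π]
    nlinarith [hu2, hg2, hγ, hγ4]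
  have hL := lambda0_bound h0 h1
  rw [habs] at hL
  have hD0 : 0 < ‖ρ‖ * ‖1-ρ‖ :=
    mul_pos (norm_pos_iff.mpr hρ0) (norm_pos_iff.mpr h1ρ)
  rw [div_le_iff₀ hD0] at hL
  set B : ℝ := 2 * (1 - rexp (-(2*π)))⁻¹ * (rexp (-π) * (2828/10000)) with hB
  set D : ℝ := ‖ρ‖ * ‖1-ρ‖ with hD
  have hB0 : 0 ≤ B := by
    have he2 : rexp (-(2*π)) < 1 := by
      rw [Real.exp_lt_one_iff]; nlinarith [Real.pi_pos]
    have : 0 ≤ (1 - rexp (-(2*π)))⁻¹ := (inv_pos.mpr (by linarith)).le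
    rw [hB]; positivity
  have h1le : 1 ≤ B * D := hL
  have hsq : 1 ≤ (B*D)^2 := by nlinarith
  have h2 : B^2*D^2 ≤ B^2*(1/16+4*π^2+16*π^4) :=
    mul_le_mul_of_nonneg_left hD2 (sq_nonneg B)
  have h3 := numeric_final
  rw [← hB] at h3
  have e4 : (B*D)^2 = B^2*D^2 := by ring
  have e5 : B^2*(1/16+4*π^2+16*π^4) = (1/16+4*π^2+16*π^4)*B^2 := by ring
  linarith
end

section
/- For all real numbers δ, β, z with 0 < δ < ½, β > 2π and 0 < z < 2π², setting μ = (½ − 2δ² + 2β²)/((¼ + δ² + β²)² − δ²) and ν = 1/((¼ + δ² + β²)² − δ²), one has 0 < μ·z − ν·z² < 1. -/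
open Real

set_option maxHeartbeats 1000000

theorem mu_z_sub_nu_z_sq_bounds (δ β z : ℝ) (hδ0 : 0 < δ) (hδ1 : δ < 1 / 2)
    (hβ : 2 * π < β) (hz0 : 0 < z) (hz1 : z < 2 * π ^ 2) :
    0 < ((1 / 2 - 2 * δ ^ 2 + 2 * β ^ 2) / ((1 / 4 + δ ^ 2 + β ^ 2) ^ 2 - δ ^ 2)) * z -
        (1 / ((1 / 4 + δ ^ 2 + β ^ 2) ^ 2 - δ ^ 2)) * z ^ 2 ∧
      ((1 / 2 - 2 * δ ^ 2 + 2 * β ^ 2) / ((1 / 4 + δ ^ 2 + β ^ 2) ^ 2 - δ ^ 2)) * z -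
        (1 / ((1 / 4 + δ ^ 2 + β ^ 2) ^ 2 - δ ^ 2)) * z ^ 2 < 1 := by
  have hπ : (3 : ℝ) < π := by
    have := Real.pi_gt_d6
    linarith
  have hπ0 : (0 : ℝ) < π := by linarith
  have hβ4 : 4 * π ^ 2 < β ^ 2 := by nlinarith
  have hδ2 : δ ^ 2 < 1 / 4 := by nlinarith
  have hD : (0 : ℝ) < (1 / 4 + δ ^ 2 + β ^ 2) ^ 2 - δ ^ 2 := by nlinarith
  have key : ((1 / 2 - 2 * δ ^ 2 + 2 * β ^ 2) / ((1 / 4 + δ ^ 2 + β ^ 2) ^ 2 - δ ^ 2)) * z -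
      (1 / ((1 / 4 + δ ^ 2 + β ^ 2) ^ 2 - δ ^ 2)) * z ^ 2 =
      ((1 / 2 - 2 * δ ^ 2 + 2 * β ^ 2) * z - z ^ 2) / ((1 / 4 + δ ^ 2 + β ^ 2) ^ 2 - δ ^ 2) := by
    ring
  rw [key]
  have hμz : z < 1 / 2 - 2 * δ ^ 2 + 2 * β ^ 2 := by nlinarith
  constructor
  · apply div_pos _ hD
    nlinarith [mul_pos hz0 (sub_pos.mpr hμz)]
  · rw [div_lt_one hD]
    have h1 : (1 / 2 - 2 * δ ^ 2 + 2 * β ^ 2) * z - z ^ 2 ≤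
        2 * π ^ 2 * ((1 / 2 - 2 * δ ^ 2 + 2 * β ^ 2) - 2 * π ^ 2) := by
      nlinarith [mul_nonneg (by linarith : (0:ℝ) ≤ 2 * π ^ 2 - z)
        (by linarith : (0:ℝ) ≤ (1 / 2 - 2 * δ ^ 2 + 2 * β ^ 2) - z - 2 * π ^ 2)]
    have hb0 : (0:ℝ) < β ^ 2 := by nlinarith
    have hπ2 : (9:ℝ) < π ^ 2 := by nlinarith
    have h2 : 2 * π ^ 2 * ((1 / 2 - 2 * δ ^ 2 + 2 * β ^ 2) - 2 * π ^ 2) <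
        (1 / 4 + δ ^ 2 + β ^ 2) ^ 2 - δ ^ 2 := by
      nlinarith [mul_pos (sub_pos.mpr hβ4) hb0, sq_nonneg (δ ^ 2),
        mul_nonneg (sq_nonneg δ) (sq_nonneg β),
        mul_nonneg (sq_nonneg δ) (by linarith : (0:ℝ) ≤ 4 * π ^ 2 - 1 / 2),
        mul_pos hπ0 hπ0]
    linarith
end
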